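/- Let A = (Σ, Q, Δ, I, F) be a trim automaton with m = |Δ| transitions, let G : Δ → {1,…,m} be a bijection and H(e) = m + 1 − G(e). Define, over the alphabet Σ ⊎ {σ}, the expression R = ( Σ_{q∈Q} [ (ε_if_q∈I + Σ_{e=(s,a,q)∈Δ} a^{G(e)}) · σ · (ε_if_q∈F + Σ_{e=(q,a,t)∈Δ} a^{H(e)}) ] )^*. Then for every word u ∈ Σ^*, u ∈ L(A) if and only if σ · λ(u) ∈ L(R), where λ maps each letter a to a^{m+1}σ and is extended to words by concatenation. -/

import Mathlib

open RegularExpression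

/-- Sum of a list of regular expressions. -/
def sumList {β : Type} (l : List (RegularExpression β)) : RegularExpression β :=
  l.foldr (· + ·) 0

/-- Product (concatenation) of a list of regular expressions. -/
def mulList {β : Type} (l : List (RegularExpression β)) : RegularExpression β :=
  l.foldr (· * ·) 1

/-- `n`-fold concatenation of a regular expression. -/
def npowRE {β : Type} (r : RegularExpression β) : ℕ → RegularExpression β
  | 0 => 1
  | 1 => r
  | n + 2 => r * npowRE r (n + 1)

/-- Paths in a transition table. -/
inductive RPath {α Q : Type} (Δ : Finset (Q × α × Q)) : Q → List α → Q → Prop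
  | nil (q : Q) : RPath Δ q [] q
  | cons {q q' t : Q} {a : α} {w : List α} :
      (q, a, q') ∈ Δ → RPath Δ q' w t → RPath Δ q ((a) :: w) t

/-- The expression `R` built from the automaton `(Δ, I, F)` and bijection `G`. -/
noncomputable def RofA {α Q : Type} [Fintype Q] [DecidableEq Q] [DecidableEq α]
    (Δ : Finset (Q × α × Q)) (I F : Finset Q) (G : (Q × α × Q) → ℕ) :
    RegularExpression (α ⊕ Unit) :=
  (sumList (((Finset.univ : Finset Q)).toList.map (fun q =>
    ((if q ∈ I then 1 else 0) +
      sumList ((Δ.toList.filter (fun e => e.2.2 == q)).map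
        (fun e => npowRE (char (Sum.inl e.2.1)) (G e)))) *
    char (Sum.inr ()) *
    ((if q ∈ F then 1 else 0) +
      sumList ((Δ.toList.filter (fun e => e.1 == q)).map
        (fun e => npowRE (char (Sum.inl e.2.1)) (Δ.card + 1 - G e))))))).star

/-- The letter encoding `λ(a) = a^{m+1} σ`. -/
def lamEnc {α : Type} (m : ℕ) (x : α) : List (α ⊕ Unit) :=
  List.replicate (m + 1) (Sum.inl x) ++ [Sum.inr ()]

lemma mem_sumList {β : Type} (l : List (RegularExpression β)) (w : List β) :
    w ∈ (sumList l).matches' ↔ ∃ r ∈ l, w ∈ r.matches' := by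
  induction l with
  | nil => simp [sumList, matches'_zero]
  | cons r t ih =>
    simp only [sumList, List.foldr_cons] at ih ⊢
    rw [matches'_add, Language.mem_add, ih]
    simp

lemma mem_npow_char {β : Type} (a : β) : ∀ (n : ℕ) (w : List β),
    w ∈ (npowRE (char a) n).matches' ↔ w = List.replicate n a
  | 0, w => by simp [npowRE, matches'_epsilon, Language.mem_one]
  | 1, w => by simp [npowRE, matches'_char]; rfl
  | (n+2), w => by
    rw [npowRE, matches'_mul, Language.mem_mul]
    constructor
    · rintro ⟨x, hx, y, hy, rfl⟩
      rw [matches'_char] at hx; change x = [a] at hx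
      rw [mem_npow_char a (n+1)] at hy
      subst hx; subst hy
      simp [List.replicate_succ]
    · rintro rfl
      exact ⟨[a], by rw [matches'_char]; exact rfl, List.replicate (n+1) a,
        (mem_npow_char a (n+1) _).2 rfl, by simp [List.replicate_succ]⟩

lemma split_at_sigma {β : Type} {c : β} : ∀ {xs : List β} {xs' ys ys' : List β},
    xs ++ c :: ys = xs' ++ c :: ys' → c ∉ xs → c ∉ xs' → xs = xs' ∧ ys = ys' := by
  intro xs
  induction xs with
  | nil =>
    intro xs' ys ys' h h1 h2
    cases xs' with
    | nil => simpa using h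
    | cons a t =>
      simp only [List.nil_append, List.cons_append, List.cons.injEq] at h
      exact absurd (h.1 ▸ (List.mem_cons_self : a ∈ a :: t)) h2
  | cons a t ih =>
    intro xs' ys ys' h h1 h2
    cases xs' with
    | nil =>
      simp only [List.cons_append, List.nil_append, List.cons.injEq] at h
      exact absurd (h.1 ▸ (List.mem_cons_self : a ∈ a :: t)) h1
    | cons a' t' =>
      simp only [List.cons_append, List.cons.injEq] at h
      obtain ⟨rfl, h⟩ := h
      obtain ⟨rfl, rfl⟩ := ih h (fun hc => h1 (List.mem_cons_of_mem _ hc))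
        (fun hc => h2 (List.mem_cons_of_mem _ hc))
      exact ⟨rfl, rfl⟩

section Main

variable {α Q : Type} [Fintype Q] [DecidableEq Q] [DecidableEq α]

def PreOK (Δ : Finset (Q × α × Q)) (I : Finset Q) (G : (Q × α × Q) → ℕ) (q : Q)
    (p : List (α ⊕ Unit)) : Prop :=
  (q ∈ I ∧ p = []) ∨ ∃ e ∈ Δ, e.2.2 = q ∧ p = List.replicate (G e) (Sum.inl e.2.1)

def SufOK (Δ : Finset (Q × α × Q)) (F : Finset Q) (G : (Q × α × Q) → ℕ) (q : Q)
    (s : List (α ⊕ Unit)) : Prop :=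
  (q ∈ F ∧ s = []) ∨ ∃ e ∈ Δ, e.1 = q ∧ s = List.replicate (Δ.card + 1 - G e) (Sum.inl e.2.1)

lemma mem_pre (Δ : Finset (Q × α × Q)) (I : Finset Q) (G : (Q × α × Q) → ℕ) (q : Q)
    (p : List (α ⊕ Unit)) :
    p ∈ (((if q ∈ I then 1 else 0) +
      sumList ((Δ.toList.filter (fun e => e.2.2 == q)).map
        (fun e => npowRE (char (Sum.inl e.2.1)) (G e)))) :
        RegularExpression (α ⊕ Unit)).matches' ↔ PreOK Δ I G q p := by
  rw [matches'_add, Language.mem_add, mem_sumList, PreOK]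
  constructor
  · rintro (h | ⟨r, hr, hp⟩)
    · left
      by_cases hq : q ∈ I
      · simp only [if_pos hq, matches'_epsilon, Language.mem_one] at h
        exact ⟨hq, h⟩
      · simp only [if_neg hq, matches'_zero] at h
        exact absurd h (Language.notMem_zero p)
    · right
      simp only [List.mem_map, List.mem_filter, Finset.mem_toList, beq_iff_eq] at hr
      obtain ⟨e, ⟨he, heq⟩, rfl⟩ := hr
      rw [mem_npow_char] at hp
      exact ⟨e, he, heq, hp⟩
  · rintro (⟨hq, rfl⟩ | ⟨e, he, heq, rfl⟩)
    · left; simp [if_pos hq, matches'_epsilon, Language.mem_one]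
    · right
      refine ⟨npowRE (char (Sum.inl e.2.1)) (G e), ?_, (mem_npow_char _ _ _).2 rfl⟩
      simp only [List.mem_map, List.mem_filter, Finset.mem_toList, beq_iff_eq]
      exact ⟨e, ⟨he, heq⟩, rfl⟩

lemma mem_suf (Δ : Finset (Q × α × Q)) (F : Finset Q) (G : (Q × α × Q) → ℕ) (q : Q)
    (s : List (α ⊕ Unit)) :
    s ∈ (((if q ∈ F then 1 else 0) +
      sumList ((Δ.toList.filter (fun e => e.1 == q)).map
        (fun e => npowRE (char (Sum.inl e.2.1)) (Δ.card + 1 - G e)))) :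
        RegularExpression (α ⊕ Unit)).matches' ↔ SufOK Δ F G q s := by
  rw [matches'_add, Language.mem_add, mem_sumList, SufOK]
  constructor
  · rintro (h | ⟨r, hr, hp⟩)
    · left
      by_cases hq : q ∈ F
      · simp only [if_pos hq, matches'_epsilon, Language.mem_one] at h
        exact ⟨hq, h⟩
      · simp only [if_neg hq, matches'_zero] at h
        exact absurd h (Language.notMem_zero s)
    · right
      simp only [List.mem_map, List.mem_filter, Finset.mem_toList, beq_iff_eq] at hr
      obtain ⟨e, ⟨he, heq⟩, rfl⟩ := hr
      rw [mem_npow_char] at hp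
      exact ⟨e, he, heq, hp⟩
  · rintro (⟨hq, rfl⟩ | ⟨e, he, heq, rfl⟩)
    · left; simp [if_pos hq, matches'_epsilon, Language.mem_one]
    · right
      refine ⟨npowRE (char (Sum.inl e.2.1)) (Δ.card + 1 - G e), ?_,
        (mem_npow_char _ _ _).2 rfl⟩
      simp only [List.mem_map, List.mem_filter, Finset.mem_toList, beq_iff_eq]
      exact ⟨e, ⟨he, heq⟩, rfl⟩

lemma mem_RofA_iff (Δ : Finset (Q × α × Q)) (I F : Finset Q) (G : (Q × α × Q) → ℕ)
    (w : List (α ⊕ Unit)) :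
    w ∈ (RofA Δ I F G).matches' ↔
      ∃ L : List (List (α ⊕ Unit)), w = L.flatten ∧
        ∀ l ∈ L, ∃ q p s, PreOK Δ I G q p ∧ SufOK Δ F G q s ∧
          l = p ++ Sum.inr () :: s := by
  rw [RofA, matches'_star, Language.mem_kstar]
  refine exists_congr fun L => and_congr_right fun _ => forall₂_congr fun l _ => ?_
  rw [mem_sumList]
  constructor
  · rintro ⟨r, hr, hl⟩
    simp only [List.mem_map, Finset.mem_toList] at hr
    obtain ⟨q, -, rfl⟩ := hr
    rw [matches'_mul, matches'_mul, matches'_char, Language.mem_mul] at hl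
    obtain ⟨x, hx, s, hs, rfl⟩ := hl
    rw [Language.mem_mul] at hx
    obtain ⟨p, hp, z, hz, rfl⟩ := hx
    change z = [Sum.inr ()] at hz
    subst hz
    exact ⟨q, p, s, (mem_pre Δ I G q p).1 hp, (mem_suf Δ F G q s).1 hs, by simp⟩
  · rintro ⟨q, p, s, hp, hs, rfl⟩
    refine ⟨_, List.mem_map_of_mem (Finset.mem_toList.2 (Finset.mem_univ q)), ?_⟩
    rw [matches'_mul, matches'_mul, matches'_char, Language.mem_mul]
    exact ⟨p ++ [Sum.inr ()], Language.append_mem_mul ((mem_pre Δ I G q p).2 hp) rfl,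
      s, (mem_suf Δ F G q s).2 hs, by simp⟩

end Main

section Main2

variable {α Q : Type} [Fintype Q] [DecidableEq Q] [DecidableEq α]

lemma preok_no_sigma {Δ : Finset (Q × α × Q)} {I : Finset Q} {G : (Q × α × Q) → ℕ}
    {q : Q} {p : List (α ⊕ Unit)} (h : PreOK Δ I G q p) : (Sum.inr () : α ⊕ Unit) ∉ p := by
  rcases h with ⟨_, rfl⟩ | ⟨e, _, _, rfl⟩ <;> simp [List.mem_replicate]

lemma sufok_no_sigma {Δ : Finset (Q × α × Q)} {F : Finset Q} {G : (Q × α × Q) → ℕ}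
    {q : Q} {s : List (α ⊕ Unit)} (h : SufOK Δ F G q s) : (Sum.inr () : α ⊕ Unit) ∉ s := by
  rcases h with ⟨_, rfl⟩ | ⟨e, _, _, rfl⟩ <;> simp [List.mem_replicate]

lemma fwd (Δ : Finset (Q × α × Q)) (I F : Finset Q) (G : (Q × α × Q) → ℕ)
    (hGle : ∀ e ∈ Δ, 1 ≤ G e ∧ G e ≤ Δ.card) :
    ∀ {q f : Q} {w : List α}, RPath Δ q w f → f ∈ F →
      ∃ (s : List (α ⊕ Unit)) (L : List (List (α ⊕ Unit))), SufOK Δ F G q s ∧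
        (∀ l ∈ L, ∃ q' p s', PreOK Δ I G q' p ∧ SufOK Δ F G q' s' ∧
          l = p ++ Sum.inr () :: s') ∧
        s ++ L.flatten = (w.map (lamEnc Δ.card)).flatten := by
  intro q f w h hf
  induction h with
  | nil q =>
    refine ⟨[], ([] : List (List (α ⊕ Unit))), Or.inl ⟨hf, rfl⟩, ?_, by simp⟩
    intro l hl
    exact absurd hl List.not_mem_nil
  | @cons q q' t a w he hpath ih =>
    obtain ⟨s', L', hs', hL', heq⟩ := ih hf
    have hGe := hGle (q, a, q') he
    refine ⟨List.replicate (Δ.card + 1 - G (q, a, q')) (Sum.inl a),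
      (List.replicate (G (q, a, q')) (Sum.inl a) ++ Sum.inr () :: s') :: L',
      Or.inr ⟨(q, a, q'), he, rfl, rfl⟩, ?_, ?_⟩
    · intro l hl
      rcases List.mem_cons.1 hl with rfl | hl
      · exact ⟨q', _, _, Or.inr ⟨(q, a, q'), he, rfl, rfl⟩, hs', rfl⟩
      · exact hL' l hl
    · have hrep : List.replicate (Δ.card + 1 - G (q, a, q')) (Sum.inl a : α ⊕ Unit) ++
          List.replicate (G (q, a, q')) (Sum.inl a) =
          List.replicate (Δ.card + 1) (Sum.inl a) := by
        rw [← List.replicate_add]; congr 1; omega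
      simp only [List.flatten_cons, List.map_cons, lamEnc, ← heq]
      rw [← List.append_assoc, ← List.append_assoc, hrep]
      simp

lemma back (Δ : Finset (Q × α × Q)) (I F : Finset Q) (G : (Q × α × Q) → ℕ)
    (hGle : ∀ e ∈ Δ, 1 ≤ G e ∧ G e ≤ Δ.card)
    (hinj : ∀ e ∈ Δ, ∀ e' ∈ Δ, G e = G e' → e = e') :
    ∀ (L : List (List (α ⊕ Unit))) (q : Q) (s : List (α ⊕ Unit)) (w : List α),
      (∀ l ∈ L, ∃ q' p s', PreOK Δ I G q' p ∧ SufOK Δ F G q' s' ∧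
        l = p ++ Sum.inr () :: s') →
      SufOK Δ F G q s → s ++ L.flatten = (w.map (lamEnc Δ.card)).flatten →
      ∃ f ∈ F, RPath Δ q w f := by
  intro L
  induction L with
  | nil =>
    intro q s w _ hs heq
    simp only [List.flatten_nil, List.append_nil] at heq
    rcases hs with ⟨hqF, rfl⟩ | ⟨e, he, he1, rfl⟩
    · cases w with
      | nil => exact ⟨q, hqF, RPath.nil q⟩
      | cons b w' => simp [lamEnc] at heq
    · exfalso
      cases w with
      | nil =>
        have := hGle e he
        simp only [List.map_nil, List.flatten_nil, List.replicate_eq_nil_iff] at heq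
        omega
      | cons b w' =>
        have hmem : (Sum.inr () : α ⊕ Unit) ∈ ((b :: w').map (lamEnc Δ.card)).flatten := by
          simp [lamEnc]
        rw [← heq] at hmem
        simp [List.mem_replicate] at hmem
  | cons B L' ih =>
    intro q s w hL hs heq
    obtain ⟨q₂, p, s₂, hp, hs₂, rfl⟩ := hL B List.mem_cons_self
    cases w with
    | nil => simp [lamEnc] at heq
    | cons b w' =>
      have heq2 : (s ++ p) ++ Sum.inr () :: (s₂ ++ L'.flatten) =
          List.replicate (Δ.card + 1) (Sum.inl b) ++ Sum.inr () ::
            (w'.map (lamEnc Δ.card)).flatten := by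
        simpa [lamEnc, List.append_assoc] using heq
      obtain ⟨hsp, hrest⟩ := split_at_sigma heq2
        (by simp only [List.mem_append]; rintro (h | h)
            exacts [sufok_no_sigma hs h, preok_no_sigma hp h])
        (by simp [List.mem_replicate])
      rcases hs with ⟨hqF, rfl⟩ | ⟨e, he, he1, hsrep⟩
      · exfalso
        simp only [List.nil_append] at hsp
        rcases hp with ⟨_, rfl⟩ | ⟨e', he', _, rfl⟩
        · have := congrArg List.length hsp; simp at this
        · have := congrArg List.length hsp; simp at this
          have := hGle e' he'; omega
      · subst hsrep
        have hGe := hGle e he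
        rcases hp with ⟨hqI, rfl⟩ | ⟨e', he', he'2, rfl⟩
        · exfalso
          have := congrArg List.length hsp; simp at this
          omega
        · have hlen := congrArg List.length hsp
          simp only [List.length_append, List.length_replicate] at hlen
          have hGee : G e' = G e := by omega
          obtain rfl := hinj e' he' e he hGee
          have hval : e'.2.1 = b := by
            have hmm : (Sum.inl e'.2.1 : α ⊕ Unit) ∈
                List.replicate (Δ.card + 1) (Sum.inl b : α ⊕ Unit) := by
              rw [← hsp]
              exact List.mem_append_left _ (List.mem_replicate.2 ⟨by omega, rfl⟩)
            simpa using List.eq_of_mem_replicate hmm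
          obtain ⟨f, hf, hpath⟩ := ih q₂ s₂ w'
            (fun l hl => hL l (List.mem_cons_of_mem _ hl)) hs₂ hrest
          refine ⟨f, hf, RPath.cons ?_ hpath⟩
          obtain ⟨x, y, z⟩ := e'
          obtain rfl : x = q := he1
          obtain rfl : z = q₂ := he'2
          obtain rfl : y = b := hval
          exact he'

end Main2

/-- for a trim automaton `A` with `m` transitions and the expression
`R = (Σ_q [(ε?_I + Σ a^{G(e)}) σ (ε?_F + Σ a^{H(e)})])^*`, a word `u` is accepted
by `A` iff `σ · λ(u)` is matched by `R`, where `λ(a) = a^{m+1} σ`. -/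
theorem stmt_8 {α Q : Type} [Fintype Q] [DecidableEq Q] [DecidableEq α]
    (Δ : Finset (Q × α × Q)) (I F : Finset Q)
    (htrim : ∀ q : Q, (∃ i ∈ I, ∃ w : List α, RPath Δ i w q) ∧
                      (∃ f ∈ F, ∃ w : List α, RPath Δ q w f))
    (G : (Q × α × Q) → ℕ) (hG : Set.BijOn G ↑Δ (Set.Icc 1 Δ.card)) :
    ∀ u : List α,
      (∃ i ∈ I, ∃ f ∈ F, RPath Δ i u f) ↔
      (Sum.inr () :: (u.map (lamEnc Δ.card)).flatten) ∈ (RofA Δ I F G).matches' := by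
  have hGle : ∀ e ∈ Δ, 1 ≤ G e ∧ G e ≤ Δ.card := fun e he => hG.1 he
  have hinj : ∀ e ∈ Δ, ∀ e' ∈ Δ, G e = G e' → e = e' :=
    fun e he e' he' h => hG.2.1 he he' h
  intro u
  rw [mem_RofA_iff]
  constructor
  · rintro ⟨i, hi, f, hf, hpath⟩
    obtain ⟨s, L, hs, hL, heq⟩ := fwd Δ I F G hGle hpath hf
    refine ⟨(Sum.inr () :: s) :: L, ?_, ?_⟩
    · simp only [List.flatten_cons, List.cons_append, List.nil_append, heq]
    · intro l hl
      rcases List.mem_cons.1 hl with rfl | hl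
      · exact ⟨i, [], s, Or.inl ⟨hi, rfl⟩, hs, rfl⟩
      · exact hL l hl
  · rintro ⟨L, heq, hL⟩
    cases L with
    | nil => simp at heq
    | cons B L' =>
      obtain ⟨q, p, s, hp, hs, rfl⟩ := hL B List.mem_cons_self
      have hpn : p = [] := by
        cases p with
        | nil => rfl
        | cons a t =>
          exfalso
          have hnp := preok_no_sigma hp
          simp only [List.flatten_cons, List.cons_append, List.append_assoc,
            List.cons.injEq] at heq
          exact hnp (heq.1 ▸ (List.mem_cons_self : a ∈ a :: t))
      subst hpn
      have hqI : q ∈ I := by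
        rcases hp with ⟨hqI, -⟩ | ⟨e, he, -, hrep⟩
        · exact hqI
        · exfalso
          have := congrArg List.length hrep
          simp at this
          have := hGle e he
          omega
      have heq' : s ++ L'.flatten = (u.map (lamEnc Δ.card)).flatten := by
        simp only [List.flatten_cons, List.nil_append, List.cons_append,
          List.cons.injEq] at heq
        exact heq.2.symm
      obtain ⟨f, hf, hpath⟩ := back Δ I F G hGle hinj L' q s u
        (fun l hl => hL l (List.mem_cons_of_mem _ hl)) hs heq'
      exact ⟨q, hqI, f, hf, hpath⟩
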